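/- Let V be a finite group and H a normal subgroup of V in which every element squares to the identity (so H is an elementary abelian 2-group; in particular δ^σ = δ for every irreducible character δ of H and every field automorphism σ of ℂ). For δ ∈ Irr(H), let V_δ = {x ∈ V : δ^x = δ} denote its inertia group, where δ^x(h) = δ(xhx⁻¹). Suppose there exists an extension map Λ′ with respect to H ⊴ V, i.e., a map assigning to each δ ∈ Irr(H) an irreducible character Λ′(δ) of V_δ whose restriction to H equals δ, such that Λ′(δ)^σ = Λ′(δ) for every δ ∈ Irr(H) and every field automorphism σ of ℂ (e.g., every Λ′(δ) is rational-valued). Then there exists an extension map Λ with respect to H ⊴ V that is V-equivariant, meaning Λ(δ^x) = Λ(δ)^x for all δ ∈ Irr(H) and x ∈ V, and that satisfies Λ(δ)^σ = Λ(δ^σ) = Λ(δ) for every δ ∈ Irr(H) and every field automorphism σ of ℂ. -/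

import Mathlib

/-- `χ : G → ℂ` is an irreducible (ordinary) character of `G`:
it is the character of some simple finite-dimensional complex representation of `G`. -/
def IsIrrChar (G : Type) [Group G] (χ : G → ℂ) : Prop :=
  ∃ V : FDRep ℂ G, CategoryTheory.Simple V ∧ χ = V.character

/-- The conjugate `δ^x` of a class function `δ` on a normal subgroup `H ⊴ V`,
given by `δ^x (h) = δ (x h x⁻¹)`. -/
def conjChar {V : Type} [Group V] (H : Subgroup V) (hN : H.Normal) (x : V)
    (δ : ↥H → ℂ) : ↥H → ℂ :=
  fun h => δ ⟨x * (h : V) * x⁻¹, hN.conj_mem (h : V) h.2 x⟩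

theorem conjChar_mul {V : Type} [Group V] (H : Subgroup V) (hN : H.Normal) (x y : V)
    (δ : ↥H → ℂ) : conjChar H hN (x * y) δ = conjChar H hN y (conjChar H hN x δ) := by
  funext h
  simp only [conjChar]
  congr 1
  ext
  simp [mul_assoc]

theorem conjChar_one {V : Type} [Group V] (H : Subgroup V) (hN : H.Normal)
    (δ : ↥H → ℂ) : conjChar H hN 1 δ = δ := by
  funext h
  simp only [conjChar]
  congr 1
  ext
  simp

/-- The inertia group `V_δ = {x ∈ V ∣ δ^x = δ}` of a function `δ : H → ℂ` for `H ⊴ V`. -/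
def inertia {V : Type} [Group V] (H : Subgroup V) (hN : H.Normal) (δ : ↥H → ℂ) :
    Subgroup V where
  carrier := {x | conjChar H hN x δ = δ}
  one_mem' := conjChar_one H hN δ
  mul_mem' := by
    intro a b ha hb
    show conjChar H hN (a * b) δ = δ
    rw [conjChar_mul, ha, hb]
  inv_mem' := by
    intro a ha
    show conjChar H hN a⁻¹ δ = δ
    have h1 : conjChar H hN (a * a⁻¹) δ = conjChar H hN a⁻¹ (conjChar H hN a δ) :=
      conjChar_mul H hN a a⁻¹ δ
    rw [mul_inv_cancel, conjChar_one, ha] at h1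
    exact h1.symm

open CategoryTheory

/- ### auxiliary machinery -/

section Aux

lemma simple_of_equiv {C D : Type*} [Category C] [Category D]
    [Limits.HasZeroMorphisms C] [Limits.HasZeroMorphisms D]
    (F : C ≌ D) [F.inverse.PreservesZeroMorphisms] (X : C) [Simple X] :
    Simple (F.functor.obj X) := by
  constructor
  intro Y f m
  haveI : Simple ((𝟭 C).obj X) := inferInstanceAs (Simple X)
  have h2 : Mono (F.inverse.map f ≫ (F.unitIso.app X).inv) := mono_comp _ _
  have key := Simple.mono_isIso_iff_nonzero (F.inverse.map f ≫ (F.unitIso.app X).inv)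
  have hz : ∀ g : Y ⟶ F.functor.obj X, g = 0 ↔ F.inverse.map g ≫ (F.unitIso.app X).inv = 0 := by
    intro g
    rw [← F.inverse.map_eq_zero_iff (f := g)]
    constructor
    · intro h; rw [h, Limits.zero_comp]
    · intro h
      have := congrArg (· ≫ (F.unitIso.app X).hom) h
      simpa using this
  constructor
  · intro hf h0
    exact (key.mp inferInstance) ((hz f).mp h0)
  · intro hf
    have h1 : IsIso (F.inverse.map f ≫ (F.unitIso.app X).inv) :=
      key.mpr (fun h => hf ((hz f).mpr h))
    have h3 : IsIso (F.inverse.map f) := by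
      have : F.inverse.map f
          = (F.inverse.map f ≫ (F.unitIso.app X).inv) ≫ (F.unitIso.app X).hom := by simp
      rw [this]; infer_instance
    exact isIso_of_reflects_iso f F.inverse

/-- restriction equivalence along a group isomorphism -/
noncomputable def resEquiv {G G' : Type} [Group G] [Group G'] (e : G ≃* G') :
    FDRep ℂ G' ≌ FDRep ℂ G := by
  refine CategoryTheory.Equivalence.mk
    (Action.res _ e.toMonoidHom)
    (Action.res _ e.symm.toMonoidHom)
    ?_ ?_
  · refine (Action.resId _).symm ≪≫ eqToIso ?_ ≪≫ (Action.resComp _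
      e.symm.toMonoidHom e.toMonoidHom).symm
    congr 1
    ext x
    exact (e.apply_symm_apply x).symm
  · refine (Action.resComp _ e.toMonoidHom
      e.symm.toMonoidHom) ≪≫ eqToIso ?_ ≪≫ (Action.resId _)
    congr 1
    ext x
    exact e.symm_apply_apply x

lemma IsIrrChar.comp_mulEquiv {G G' : Type} [Group G] [Group G'] (e : G ≃* G')
    {χ : G' → ℂ} (h : IsIrrChar G' χ) : IsIrrChar G (fun g => χ (e g)) := by
  obtain ⟨W, hW, rfl⟩ := h
  haveI := hW
  haveI : (resEquiv e).inverse.PreservesZeroMorphisms :=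
    inferInstanceAs ((Action.res (FGModuleCat ℂ)
      e.symm.toMonoidHom).PreservesZeroMorphisms)
  exact ⟨(resEquiv e).functor.obj W, simple_of_equiv (resEquiv e) W, rfl⟩

lemma sigma_fixes_char {G : Type} [Group G] (hG : ∀ g : G, g * g = 1)
    {χ : G → ℂ} (h : IsIrrChar G χ) (σ : ℂ ≃+* ℂ) : (fun g => σ (χ g)) = χ := by
  obtain ⟨W, _, rfl⟩ := h
  funext g
  set f := W.ρ g with hfdef
  have hf : f * f = 1 := by rw [← map_mul, hG g, map_one]
  set p : W →ₗ[ℂ] W := (2⁻¹ : ℂ) • (1 + f) with hpdef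
  have h2 : (1 + f) * (1 + f) = (2:ℂ) • (1 + f) := by
    rw [mul_add, add_mul, add_mul, hf, one_mul, one_mul, mul_one, two_smul]
    abel
  have hp : p ∘ₗ p = p := by
    show p * p = p
    rw [hpdef, smul_mul_smul_comm, h2, smul_smul]
    norm_num
  obtain ⟨q, hq⟩ := (LinearMap.isProj_iff_isIdempotentElem p).mpr hp
  have htr : LinearMap.trace ℂ W p = (Module.finrank ℂ q : ℂ) := hq.trace
  have h2p : (2:ℂ) • p = 1 + f := by
    rw [hpdef, smul_smul]; norm_num
  have hft : f = (2:ℂ) • p - 1 := by rw [h2p]; abel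
  show σ (W.character g) = W.character g
  have hchar : W.character g = LinearMap.trace ℂ W f := rfl
  rw [hchar, hft, map_sub, map_smul, htr, LinearMap.trace_one]
  rw [smul_eq_mul, map_sub, map_mul, map_ofNat, map_natCast, map_natCast]

lemma char_conj_eq {G : Type} [Group G] {χ : G → ℂ} (h : IsIrrChar G χ) (a b : G) :
    χ (a * b * a⁻¹) = χ b := by
  obtain ⟨W, _, rfl⟩ := h
  exact FDRep.char_conj W b a

end Aux

section Constr

variable {V : Type} [Group V] (H : Subgroup V) (hN : H.Normal)

lemma conjChar_inv_eq {ρ δ : ↥H → ℂ} {x : V} (hx : conjChar H hN x ρ = δ) :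
    conjChar H hN x⁻¹ δ = ρ := by
  rw [← hx, ← conjChar_mul, mul_inv_cancel, conjChar_one]

lemma mem_inertia_conj {ρ δ : ↥H → ℂ} {x : V} (hx : conjChar H hN x ρ = δ) {y : V}
    (hy : y ∈ inertia H hN δ) : x * y * x⁻¹ ∈ inertia H hN ρ := by
  show conjChar H hN (x * y * x⁻¹) ρ = ρ
  have hy' : conjChar H hN y δ = δ := hy
  rw [conjChar_mul, conjChar_mul, hx, hy', conjChar_inv_eq H hN hx]

/-- the orbit setoid -/
def orbSetoid : Setoid (↥H → ℂ) where
  r δ₁ δ₂ := ∃ x : V, conjChar H hN x δ₁ = δ₂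
  iseqv := by
    refine ⟨fun δ => ⟨1, conjChar_one H hN δ⟩, ?_, ?_⟩
    · rintro δ₁ δ₂ ⟨x, hx⟩
      exact ⟨x⁻¹, conjChar_inv_eq H hN hx⟩
    · rintro δ₁ δ₂ δ₃ ⟨x, hx⟩ ⟨y, hy⟩
      exact ⟨x * y, by rw [conjChar_mul, hx, hy]⟩

/-- orbit representative -/
noncomputable def rep (δ : ↥H → ℂ) : ↥H → ℂ :=
  Quotient.out (Quotient.mk (orbSetoid H hN) δ)

lemma rep_spec (δ : ↥H → ℂ) : ∃ x : V, conjChar H hN x (rep H hN δ) = δ :=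
  Quotient.exact (Quotient.out_eq (Quotient.mk (orbSetoid H hN) δ))

lemma rep_eq {δ δ' : ↥H → ℂ} (x : V) (h : conjChar H hN x δ = δ') :
    rep H hN δ = rep H hN δ' := by
  unfold rep
  rw [Quotient.sound (⟨x, h⟩ : (orbSetoid H hN).r δ δ')]

noncomputable def xsel (δ : ↥H → ℂ) : V := (rep_spec H hN δ).choose

lemma xsel_spec (δ : ↥H → ℂ) : conjChar H hN (xsel H hN δ) (rep H hN δ) = δ :=
  (rep_spec H hN δ).choose_spec

/-- conjugation as iso between inertia groups -/
def inertiaConj (ρ δ : ↥H → ℂ) (u : V) (hu : conjChar H hN u ρ = δ) :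
    ↥(inertia H hN δ) ≃* ↥(inertia H hN ρ) where
  toFun y := ⟨u * ↑y * u⁻¹, mem_inertia_conj H hN hu y.2⟩
  invFun y := ⟨u⁻¹ * ↑y * u, by
    have := mem_inertia_conj H hN (conjChar_inv_eq H hN hu) y.2
    simpa using this⟩
  left_inv y := by ext; simp; group
  right_inv y := by ext; simp; group
  map_mul' a b := by ext; simp

/-- conjugation as a mul-equiv of `H` -/
def conjHEquiv (z : V) : ↥H ≃* ↥H where
  toFun h := ⟨z * ↑h * z⁻¹, hN.conj_mem _ h.2 z⟩
  invFun h := ⟨z⁻¹ * ↑h * z, by have := hN.conj_mem _ h.2 z⁻¹; simpa using this⟩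
  left_inv h := by ext; simp; group
  right_inv h := by ext; simp; group
  map_mul' a b := by ext; simp

lemma isIrrChar_conjChar {δ : ↥H → ℂ} (h : IsIrrChar ↥H δ) (z : V) :
    IsIrrChar ↥H (conjChar H hN z δ) :=
  IsIrrChar.comp_mulEquiv (conjHEquiv H hN z) h

lemma isIrrChar_rep {δ : ↥H → ℂ} (h : IsIrrChar ↥H δ) : IsIrrChar ↥H (rep H hN δ) := by
  have := isIrrChar_conjChar H hN h (xsel H hN δ)⁻¹
  rwa [conjChar_inv_eq H hN (xsel_spec H hN δ)] at this

variable (Λ' : ∀ δ : ↥H → ℂ, ↥(inertia H hN δ) → ℂ)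

/-- the equivariant extension map -/
noncomputable def Lam : ∀ δ : ↥H → ℂ, ↥(inertia H hN δ) → ℂ :=
  fun δ y => Λ' (rep H hN δ)
    ⟨xsel H hN δ * ↑y * (xsel H hN δ)⁻¹, mem_inertia_conj H hN (xsel_spec H hN δ) y.2⟩

/-- value of `Λ' ρ` only depends on the conjugate `δ`, not on the choice of conjugator -/
lemma indep (ρ : ↥H → ℂ) (hΛ : IsIrrChar ↥(inertia H hN ρ) (Λ' ρ)) (u v y : V)
    (huv : conjChar H hN u ρ = conjChar H hN v ρ)
    (hy : u * y * u⁻¹ ∈ inertia H hN ρ) (hy' : v * y * v⁻¹ ∈ inertia H hN ρ) :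
    Λ' ρ ⟨u * y * u⁻¹, hy⟩ = Λ' ρ ⟨v * y * v⁻¹, hy'⟩ := by
  have hw : v * u⁻¹ ∈ inertia H hN ρ := by
    show conjChar H hN (v * u⁻¹) ρ = ρ
    rw [conjChar_mul, ← huv, ← conjChar_mul, mul_inv_cancel, conjChar_one]
  have heq : (⟨v * y * v⁻¹, hy'⟩ : ↥(inertia H hN ρ))
      = ⟨v * u⁻¹, hw⟩ * ⟨u * y * u⁻¹, hy⟩ * (⟨v * u⁻¹, hw⟩)⁻¹ := by
    ext; simp; group
  rw [heq]
  exact (char_conj_eq hΛ _ _).symm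

lemma lam_cast {ρ₁ ρ₂ : ↥H → ℂ} (h : ρ₁ = ρ₂) (a : V) (h₁ : a ∈ inertia H hN ρ₁)
    (h₂ : a ∈ inertia H hN ρ₂) : Λ' ρ₁ ⟨a, h₁⟩ = Λ' ρ₂ ⟨a, h₂⟩ := by
  subst h; rfl

lemma lam_congr (ρ : ↥H → ℂ) {a b : V} (h : a = b) (h₁ : a ∈ inertia H hN ρ)
    (h₂ : b ∈ inertia H hN ρ) : Λ' ρ ⟨a, h₁⟩ = Λ' ρ ⟨b, h₂⟩ := by
  subst h; rfl

end Constr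


/-- Let `H ⊴ V` be finite groups with `H` elementary abelian of exponent `2`.
If there is an extension map `Λ'` with respect to `H ⊴ V` all of whose values are fixed by
every field automorphism of `ℂ`, then there is a `V`-equivariant extension map `Λ` with
respect to `H ⊴ V` satisfying `Λ(δ)^σ = Λ(δ^σ) = Λ(δ)` (here `δ^σ = δ`) for all
irreducible `δ` and all field automorphisms `σ` of `ℂ`. -/
theorem stmt_7 {V : Type} [Group V] [Finite V] (H : Subgroup V) (hN : H.Normal)
    (hH2 : ∀ h ∈ H, h * h = 1)
    (Λ' : ∀ δ : ↥H → ℂ, ↥(inertia H hN δ) → ℂ)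
    (hΛ' : ∀ δ : ↥H → ℂ, IsIrrChar ↥H δ →
      IsIrrChar ↥(inertia H hN δ) (Λ' δ) ∧
      (∀ (h : V) (hh : h ∈ H) (hh' : h ∈ inertia H hN δ), Λ' δ ⟨h, hh'⟩ = δ ⟨h, hh⟩) ∧
      (∀ σ : ℂ ≃+* ℂ, (fun t => σ (Λ' δ t)) = Λ' δ)) :
    ∃ Λ : ∀ δ : ↥H → ℂ, ↥(inertia H hN δ) → ℂ,
      ∀ δ : ↥H → ℂ, IsIrrChar ↥H δ →
        IsIrrChar ↥(inertia H hN δ) (Λ δ) ∧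
        (∀ (h : V) (hh : h ∈ H) (hh' : h ∈ inertia H hN δ), Λ δ ⟨h, hh'⟩ = δ ⟨h, hh⟩) ∧
        (∀ (x y : V) (hy : y ∈ inertia H hN (conjChar H hN x δ))
            (hy' : x * y * x⁻¹ ∈ inertia H hN δ),
            Λ (conjChar H hN x δ) ⟨y, hy⟩ = Λ δ ⟨x * y * x⁻¹, hy'⟩) ∧
        (∀ σ : ℂ ≃+* ℂ, (fun h => σ (δ h)) = δ ∧ (fun t => σ (Λ δ t)) = Λ δ) := by
  classical
  refine ⟨Lam H hN Λ', ?_⟩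
  intro δ hδ
  have hirrρ : IsIrrChar ↥H (rep H hN δ) := isIrrChar_rep H hN hδ
  obtain ⟨hΛ1, hΛ2, hΛ3⟩ := hΛ' (rep H hN δ) hirrρ
  have hts : conjChar H hN (xsel H hN δ) (rep H hN δ) = δ := xsel_spec H hN δ
  refine ⟨?_, ?_, ?_, ?_⟩
  · exact IsIrrChar.comp_mulEquiv (inertiaConj H hN (rep H hN δ) δ (xsel H hN δ) hts) hΛ1
  · intro h hh hh'
    have key := hΛ2 (xsel H hN δ * h * (xsel H hN δ)⁻¹)
      (hN.conj_mem h hh (xsel H hN δ))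
      (mem_inertia_conj H hN hts hh')
    have hδval : δ ⟨h, hh⟩
        = rep H hN δ ⟨xsel H hN δ * h * (xsel H hN δ)⁻¹, hN.conj_mem h hh (xsel H hN δ)⟩ := by
      conv_lhs => rw [← hts]
      rfl
    rw [hδval]
    exact key
  · intro x y hy hy'
    have hrep : rep H hN δ = rep H hN (conjChar H hN x δ) := rep_eq H hN x rfl
    have hu : conjChar H hN (xsel H hN (conjChar H hN x δ)) (rep H hN δ)
        = conjChar H hN x δ := by
      rw [hrep]; exact xsel_spec H hN (conjChar H hN x δ)
    have m1 : xsel H hN (conjChar H hN x δ) * y * (xsel H hN (conjChar H hN x δ))⁻¹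
        ∈ inertia H hN (rep H hN δ) := mem_inertia_conj H hN hu hy
    have step1 : Lam H hN Λ' (conjChar H hN x δ) ⟨y, hy⟩
        = Λ' (rep H hN δ) ⟨_, m1⟩ :=
      lam_cast H hN Λ' hrep.symm _ _ m1
    have hv : conjChar H hN (xsel H hN δ * x) (rep H hN δ) = conjChar H hN x δ := by
      rw [conjChar_mul, hts]
    have m2 : (xsel H hN δ * x) * y * (xsel H hN δ * x)⁻¹ ∈ inertia H hN (rep H hN δ) :=
      mem_inertia_conj H hN hv hy
    have step2 : Λ' (rep H hN δ) ⟨_, m1⟩ = Λ' (rep H hN δ) ⟨_, m2⟩ :=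
      indep H hN Λ' (rep H hN δ) hΛ1 _ _ y (by rw [hu, hv]) m1 m2
    have m3 : xsel H hN δ * (x * y * x⁻¹) * (xsel H hN δ)⁻¹ ∈ inertia H hN (rep H hN δ) :=
      mem_inertia_conj H hN hts hy'
    have step3 : Λ' (rep H hN δ) ⟨_, m2⟩ = Λ' (rep H hN δ) ⟨_, m3⟩ :=
      lam_congr H hN Λ' (rep H hN δ) (by group) m2 m3
    exact step1.trans (step2.trans step3)
  · intro σ
    refine ⟨sigma_fixes_char (fun g => Subtype.ext (hH2 g g.2)) hδ σ, ?_⟩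
    funext s
    exact congrFun (hΛ3 σ) _
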